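/- arXiv:1007.2096 — 4 statements merged into one kernel-verified Lean document; each statement's English description precedes it below -/
import Mathlib

section
/- Let ε be an n-dimensional Gaussian vector with i.i.d. centered components of variance σ² > 0. Then E[(‖ε‖² − 2nσ²)₊] ≤ 3σ² for all n ≥ 1, where x₊ denotes the positive part of x. -/
open MeasureTheory ProbabilityTheory

open Real Set Filter

section aux
open MeasureTheory Real Set Filter

lemma intg {b : ℝ} (hb : 0 < b) (k : ℕ) :
    Integrable fun x : ℝ => x ^ k * Real.exp (-b * x ^ 2) := by
  have h : (-1 : ℝ) < k := by
    have : (0:ℝ) ≤ k := Nat.cast_nonneg k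
    linarith
  simpa [Real.rpow_natCast] using integrable_rpow_mul_exp_neg_mul_sq hb h

lemma tend_top {b : ℝ} (hb : 0 < b) (k : ℕ) :
    Tendsto (fun x : ℝ => x ^ k * Real.exp (-b * x ^ 2)) atTop (nhds 0) := by
  have h := rpow_mul_exp_neg_mul_sq_isLittleO_exp_neg hb (k : ℝ)
  have h2 : Tendsto (fun x : ℝ => Real.exp (-(1/2) * x)) atTop (nhds 0) := by
    apply Real.tendsto_exp_atBot.comp
    exact (tendsto_const_mul_atBot_of_neg (by norm_num)).mpr tendsto_id
  have := h.trans_tendsto h2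
  simpa [Real.rpow_natCast] using this

lemma tend_bot {b : ℝ} (hb : 0 < b) (k : ℕ) :
    Tendsto (fun x : ℝ => x ^ k * Real.exp (-b * x ^ 2)) atBot (nhds 0) := by
  have h := (tend_top hb k).comp tendsto_neg_atBot_atTop
  have : (fun x : ℝ => (-x) ^ k * Real.exp (-b * (-x) ^ 2)) =
      fun x : ℝ => (-1:ℝ)^k * (x ^ k * Real.exp (-b * x ^ 2)) := by
    funext x; rw [neg_pow]; ring_nf
  rw [Function.comp_def] at h
  rw [this] at h
  have := h.const_mul ((-1:ℝ)^k)
  simpa [← mul_assoc, ← mul_pow] using this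

open MeasureTheory Real Set Filter

lemma moment_rec {b : ℝ} (hb : 0 < b) (k : ℕ) :
    (∫ x : ℝ, x ^ (k+2) * Real.exp (-b * x ^ 2)) =
      ((k+1 : ℝ)/(2*b)) * ∫ x : ℝ, x ^ k * Real.exp (-b * x ^ 2) := by
  set f : ℝ → ℝ := fun x => x ^ (k+1) * Real.exp (-b * x ^ 2) with hf
  set g : ℝ → ℝ := fun x => (k+1 : ℝ) * (x ^ k * Real.exp (-b * x ^ 2))
      - (2*b) * (x ^ (k+2) * Real.exp (-b * x ^ 2)) with hg
  have hderiv : ∀ x : ℝ, HasDerivAt f (g x) x := by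
    intro x
    have h1 : HasDerivAt (fun x : ℝ => x ^ (k+1)) ((k+1 : ℝ) * x ^ k) x := by
      simpa using (hasDerivAt_pow (k+1) x)
    have h2 : HasDerivAt (fun x : ℝ => Real.exp (-b * x ^ 2)) ((-b * (2*x)) * Real.exp (-b * x ^ 2)) x := by
      have h3 : HasDerivAt (fun x : ℝ => -b * x ^ 2) (-b * (2*x)) x := by
        simpa using ((hasDerivAt_pow 2 x).const_mul (-b))
      simpa [mul_comm] using h3.exp
    have : HasDerivAt f _ x := h1.mul h2
    convert this using 1
    show (k+1 : ℝ) * (x ^ k * Real.exp (-b * x ^ 2)) - (2*b) * (x ^ (k+2) * Real.exp (-b * x ^ 2)) = _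
    ring
  have hgint : Integrable g := by
    exact ((intg hb k).const_mul _).sub ((intg hb (k+2)).const_mul _)
  have hIoi : ∫ x in Ioi (0:ℝ), g x = 0 - f 0 :=
    integral_Ioi_of_hasDerivAt_of_tendsto' (fun x _ => hderiv x)
      hgint.integrableOn (tend_top hb (k+1))
  have hIic : ∫ x in Iic (0:ℝ), g x = f 0 - 0 :=
    integral_Iic_of_hasDerivAt_of_tendsto' (fun x _ => hderiv x)
      hgint.integrableOn (tend_bot hb (k+1))
  have htot : ∫ x : ℝ, g x = 0 := by
    rw [← intervalIntegral.integral_Iic_add_Ioi hgint.integrableOn hgint.integrableOn, hIoi, hIic]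
    ring
  have hsplit : ∫ x : ℝ, g x = (k+1 : ℝ) * (∫ x : ℝ, x ^ k * Real.exp (-b * x ^ 2))
      - (2*b) * ∫ x : ℝ, x ^ (k+2) * Real.exp (-b * x ^ 2) := by
    rw [hg, integral_sub ((intg hb k).const_mul _) ((intg hb (k+2)).const_mul _),
      integral_const_mul, integral_const_mul]
  rw [hsplit] at htot
  simp only [neg_mul] at htot ⊢
  field_simp
  linarith




variable {σ : ℝ} (hσ : 0 < σ)

noncomputable def gv (σ : ℝ) : NNReal := ⟨σ ^ 2, sq_nonneg σ⟩

lemma gv_ne (hσ : 0 < σ) : gv σ ≠ 0 := by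
  rw [ne_eq, ← NNReal.coe_eq_zero]
  change σ ^ 2 ≠ 0
  positivity

lemma gpdf_eq (hσ : 0 < σ) : gaussianPDFReal 0 (gv σ)
    = fun x => (Real.sqrt (2 * π * σ^2))⁻¹ * Real.exp (-(1/(2*σ^2)) * x ^ 2) := by
  funext x
  simp only [gaussianPDFReal, gv, NNReal.coe_mk, sub_zero]
  congr 1
  field_simp
  rfl

lemma integral_gauss (hσ : 0 < σ) (g : ℝ → ℝ) :
    ∫ x, g x ∂(gaussianReal 0 (gv σ)) = ∫ x, gaussianPDFReal 0 (gv σ) x * g x := by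
  rw [gaussianReal_of_var_ne_zero _ (gv_ne hσ)]
  have : gaussianPDF 0 (gv σ)
      = fun x => ((gaussianPDFReal 0 (gv σ) x).toNNReal : ENNReal) := rfl
  rw [this, integral_withDensity_eq_integral_smul
    ((measurable_gaussianPDFReal _ _).real_toNNReal) g]
  congr 1
  funext x
  simp [NNReal.smul_def, Real.coe_toNNReal _ (gaussianPDFReal_nonneg _ _ x)]

lemma hb_pos (hσ : 0 < σ) : (0:ℝ) < 1/(2*σ^2) := by positivity

lemma integral_pow_gauss (hσ : 0 < σ) (k : ℕ) :
    ∫ x, x ^ k ∂(gaussianReal 0 (gv σ)) =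
      (Real.sqrt (2 * π * σ^2))⁻¹ * ∫ x : ℝ, x ^ k * Real.exp (-(1/(2*σ^2)) * x ^ 2) := by
  rw [integral_gauss hσ, gpdf_eq hσ]
  rw [← integral_const_mul]
  congr 1; funext x; ring

lemma integrable_pow_gauss (hσ : 0 < σ) (k : ℕ) :
    Integrable (fun x => x ^ k) (gaussianReal 0 (gv σ)) := by
  rw [gaussianReal_of_var_ne_zero _ (gv_ne hσ)]
  rw [integrable_withDensity_iff (measurable_gaussianPDF _ _)
    (Filter.Eventually.of_forall fun x => ENNReal.ofReal_lt_top)]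
  have : (fun x : ℝ => x ^ k * (gaussianPDF 0 (gv σ) x).toReal)
      = fun x => (Real.sqrt (2 * π * σ^2))⁻¹ * (x ^ k * Real.exp (-(1/(2*σ^2)) * x ^ 2)) := by
    funext x
    rw [gaussianPDF, ENNReal.toReal_ofReal (gaussianPDFReal_nonneg _ _ x), gpdf_eq hσ]
    ring
  rw [this]
  exact (intg (hb_pos hσ) k).const_mul _

lemma integral_sq_gauss (hσ : 0 < σ) :
    ∫ x, x ^ 2 ∂(gaussianReal 0 (gv σ)) = σ ^ 2 := by
  have h0 : ∫ x, (1:ℝ) ∂(gaussianReal 0 (gv σ)) = 1 := by simp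
  have h0' : (Real.sqrt (2 * π * σ^2))⁻¹ *
      (∫ x : ℝ, x ^ 0 * Real.exp (-(1/(2*σ^2)) * x ^ 2)) = 1 := by
    rw [← integral_pow_gauss hσ 0]; simpa using h0
  have := integral_pow_gauss hσ 2
  rw [moment_rec (hb_pos hσ) 0] at this
  rw [this]
  have hs : (0:ℝ) < 2 * σ ^ 2 := by positivity
  rw [show ((0:ℕ)+1 : ℝ)/(2*(1/(2*σ^2))) = σ^2 by field_simp; simp]
  rw [mul_left_comm, h0', mul_one]

lemma integral_pow4_gauss (hσ : 0 < σ) :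
    ∫ x, x ^ 4 ∂(gaussianReal 0 (gv σ)) = 3 * σ ^ 4 := by
  have h2 := integral_sq_gauss hσ
  rw [integral_pow_gauss hσ 2] at h2
  have := integral_pow_gauss hσ 4
  rw [show (4:ℕ) = 2 + 2 from rfl, moment_rec (hb_pos hσ) 2] at this
  rw [this, mul_left_comm, h2]
  rw [show ((2:ℕ)+1 : ℝ)/(2*(1/(2*σ^2))) = 3 * σ^2 by field_simp; ring]
  ring



end aux


/-- If `ε` is an `n`-dimensional Gaussian vector with i.i.d. centered coordinates of
variance `σ² > 0`, then `E[(‖ε‖² − 2nσ²)₊] ≤ 3σ²`. -/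
theorem stmt_0 {Ω : Type*} [MeasureSpace Ω] [IsProbabilityMeasure (ℙ : Measure Ω)]
    {n : ℕ} (hn : 1 ≤ n) (σ : ℝ) (hσ : 0 < σ)
    (ε : Ω → EuclideanSpace ℝ (Fin n))
    (hmeas : ∀ i, Measurable fun ω => ε ω i)
    (hlaw : ∀ i, Measure.map (fun ω => ε ω i) ℙ = gaussianReal 0 ⟨σ ^ 2, sq_nonneg σ⟩)
    (hindep : iIndepFun (fun i ω => ε ω i) ℙ) :
    ∫ ω, max (‖ε ω‖ ^ 2 - 2 * n * σ ^ 2) 0 ∂ℙ ≤ 3 * σ ^ 2 := by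
  set ν : Measure ℝ := gaussianReal 0 (gv σ) with hνdef
  have hlaw' : ∀ i, Measure.map (fun ω => ε ω i) ℙ = ν := hlaw
  have hε : ∀ i, AEMeasurable (fun ω => ε ω i) ℙ := fun i => (hmeas i).aemeasurable
  have hint : ∀ (i) (g : ℝ → ℝ), Measurable g → Integrable g ν →
      Integrable (fun ω => g (ε ω i)) ℙ := by
    intro i g hg hgi
    rw [← hlaw' i] at hgi
    exact (integrable_map_measure hg.aestronglyMeasurable (hε i)).mp hgi
  have hCoV : ∀ (i) (g : ℝ → ℝ), Measurable g →
      (∫ ω, g (ε ω i) ∂ℙ) = ∫ x, g x ∂ν := by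
    intro i g hg
    rw [← hlaw' i, integral_map (hε i) (hg.aestronglyMeasurable)]
  -- the centered square variables
  set g1 : ℝ → ℝ := fun x => x ^ 2 - σ ^ 2 with hg1def
  have hg1meas : Measurable g1 := (measurable_id.pow_const 2).sub measurable_const
  have hg1int : Integrable g1 ν := (integrable_pow_gauss hσ 2).sub (integrable_const _)
  have hg1mean : ∫ x, g1 x ∂ν = 0 := by
    rw [hg1def]
    rw [integral_sub (integrable_pow_gauss hσ 2) (integrable_const _), integral_sq_gauss hσ]
    simp
  have hg2int : Integrable (fun x => g1 x * g1 x) ν := by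
    have : (fun x : ℝ => g1 x * g1 x)
        = fun x => (x ^ 4 - (2 * σ ^ 2) * x ^ 2) + (σ^2*σ^2) * x ^ 0 := by
      funext x; simp only [hg1def]; ring
    rw [this]
    exact ((integrable_pow_gauss hσ 4).sub
      ((integrable_pow_gauss hσ 2).const_mul _)).add ((integrable_pow_gauss hσ 0).const_mul _)
  have hg2mean : ∫ x, g1 x * g1 x ∂ν = 2 * σ ^ 4 := by
    have : (fun x : ℝ => g1 x * g1 x)
        = fun x => (x ^ 4 - (2 * σ ^ 2) * x ^ 2) + (σ^2*σ^2) * x ^ 0 := by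
      funext x; simp only [hg1def]; ring
    have i1 : Integrable (fun x : ℝ => x ^ 4 - (2 * σ ^ 2) * x ^ 2) ν :=
      (integrable_pow_gauss hσ 4).sub ((integrable_pow_gauss hσ 2).const_mul _)
    have i2 : Integrable (fun x : ℝ => (σ^2*σ^2) * x ^ 0) ν :=
      (integrable_pow_gauss hσ 0).const_mul _
    rw [this, integral_add i1 i2,
      integral_sub (integrable_pow_gauss hσ 4) ((integrable_pow_gauss hσ 2).const_mul _),
      integral_const_mul, integral_const_mul, integral_sq_gauss hσ, integral_pow4_gauss hσ]
    have : ∫ x, x ^ 0 ∂ν = 1 := by simp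
    rw [this]; ring
  set Y : Fin n → Ω → ℝ := fun i ω => g1 (ε ω i) with hYdef
  have hYmeas : ∀ i, Measurable (Y i) := fun i => hg1meas.comp (hmeas i)
  have hYint : ∀ i, Integrable (Y i) ℙ := fun i => hint i g1 hg1meas hg1int
  have hYmean : ∀ i, ∫ ω, Y i ω ∂ℙ = 0 := fun i => (hCoV i g1 hg1meas).trans hg1mean
  have hYsqint : ∀ i, Integrable (fun ω => Y i ω * Y i ω) ℙ :=
    fun i => hint i (fun x => g1 x * g1 x) (hg1meas.mul hg1meas) hg2int
  have hYsqmean : ∀ i, ∫ ω, Y i ω * Y i ω ∂ℙ = 2 * σ ^ 4 :=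
    fun i => (hCoV i (fun x => g1 x * g1 x) (hg1meas.mul hg1meas)).trans hg2mean
  have hYindep : ∀ i j, i ≠ j → IndepFun (Y i) (Y j) ℙ := by
    intro i j hij
    exact (hindep.indepFun hij).comp hg1meas hg1meas
  have hYmulint : ∀ i j, Integrable (fun ω => Y i ω * Y j ω) ℙ := by
    intro i j
    rcases eq_or_ne i j with rfl | hij
    · exact hYsqint i
    · exact (hYindep i j hij).integrable_mul (hYint i) (hYint j)
  have hYmul : ∀ i j, i ≠ j → ∫ ω, Y i ω * Y j ω ∂ℙ = 0 := by
    intro i j hij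
    have h2 := (hYindep i j hij).integral_mul_eq_mul_integral (hYint i).aestronglyMeasurable (hYint j).aestronglyMeasurable
    rw [hYmean i, zero_mul] at h2
    exact h2
  set G : Ω → ℝ := fun ω => ∑ i, Y i ω with hGdef
  have hGsq : ∀ ω, G ω * G ω = ∑ i, ∑ j, Y i ω * Y j ω := by
    intro ω
    rw [hGdef, Finset.sum_mul_sum]
  have hGint2 : Integrable (fun ω => G ω * G ω) ℙ := by
    have : (fun ω => G ω * G ω) = fun ω => ∑ i, ∑ j, Y i ω * Y j ω := funext hGsq
    rw [this]
    exact integrable_finset_sum _ fun i _ => integrable_finset_sum _ fun j _ => hYmulint i j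
  have hGval : ∫ ω, G ω * G ω ∂ℙ = n * (2 * σ ^ 4) := by
    have : (fun ω => G ω * G ω) = fun ω => ∑ i, ∑ j, Y i ω * Y j ω := funext hGsq
    rw [this, integral_finset_sum _ fun i _ => integrable_finset_sum _ fun j _ => hYmulint i j]
    have : ∀ i : Fin n, (∫ ω, ∑ j, Y i ω * Y j ω ∂ℙ) = 2 * σ ^ 4 := by
      intro i
      rw [integral_finset_sum _ fun j _ => hYmulint i j]
      rw [Finset.sum_eq_single i (fun j _ hji => hYmul i j (Ne.symm hji)) (by simp)]
      exact hYsqmean i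
    rw [Finset.sum_congr rfl fun i _ => this i]
    simp [mul_comm]
  have hnorm : ∀ ω, ‖ε ω‖ ^ 2 = ∑ i, (ε ω i) ^ 2 := by
    intro ω
    rw [EuclideanSpace.norm_eq]
    rw [Real.sq_sqrt (Finset.sum_nonneg fun i _ => sq_nonneg _)]
    simp [sq_abs]
  have hGeq : ∀ ω, G ω = ‖ε ω‖ ^ 2 - n * σ ^ 2 := by
    intro ω
    rw [hnorm ω, hGdef]
    simp only [hYdef, hg1def, Finset.sum_sub_distrib, Finset.sum_const, Finset.card_univ,
      Fintype.card_fin, nsmul_eq_mul]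
  have hn1 : (1:ℝ) ≤ n := by exact_mod_cast hn
  have ha : (0:ℝ) < n * σ ^ 2 := mul_pos (by linarith) (by positivity)
  have hpt : ∀ ω, max (‖ε ω‖ ^ 2 - 2 * n * σ ^ 2) 0 ≤ (G ω * G ω) / (4 * (n * σ ^ 2)) := by
    intro ω
    have hG := hGeq ω
    have h1 : 0 ≤ (G ω * G ω) / (4 * (n * σ ^ 2)) := div_nonneg (mul_self_nonneg _) (by positivity)
    rcases le_or_gt (‖ε ω‖ ^ 2 - 2 * n * σ ^ 2) 0 with h | h
    · rw [max_eq_right h]; exact h1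
    · rw [max_eq_left h.le]
      rw [le_div_iff₀ (by positivity)]
      nlinarith [sq_nonneg (‖ε ω‖ ^ 2 - 3 * ((n:ℝ) * σ ^ 2))]
  have hmono : ∫ ω, max (‖ε ω‖ ^ 2 - 2 * n * σ ^ 2) 0 ∂ℙ
      ≤ ∫ ω, (G ω * G ω) / (4 * (n * σ ^ 2)) ∂ℙ := by
    refine integral_mono_of_nonneg (Filter.Eventually.of_forall fun ω => le_max_right _ _)
      (hGint2.div_const _) (Filter.Eventually.of_forall hpt)
  have hval : ∫ ω, (G ω * G ω) / (4 * (n * σ ^ 2)) ∂ℙ = σ ^ 2 / 2 := by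
    rw [integral_div, hGval]
    field_simp
    ring
  rw [hval] at hmono
  refine hmono.trans ?_
  nlinarith [sq_nonneg σ]
end

section
/- Let A be an n×n real matrix inducing a one-to-one map from rg(A*) to rg(A), with pseudo-inverse A⁺ : rg(A) → rg(A*). Let Π̄ : rg(A) → rg(A*) be the restriction of the orthogonal projection onto rg(A*). Let S be the span of the right-singular vectors of A⁺ − Π̄ associated to singular values strictly smaller than 1, and Π_S the orthogonal projection onto S. Then for every f ∈ ℝⁿ, ‖(I − Π_S)Af‖ ≤ ‖f − Af‖. -/
open MeasureTheory Finset

set_option maxHeartbeats 1000000 in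
/-- Let `A` be a linear operator on `ℝⁿ`, `A⁺` its pseudo-inverse (inverse of the
bijection `rg(A*) → rg(A)` induced by `A`), and `Π̄` the orthogonal projection onto
`rg(A*)` restricted to `rg(A)`.  If `A⁺ − Π̄` has a singular value decomposition with
singular values `s k`, right-singular vectors `v k` (an orthonormal basis of `rg(A)`)
and left-singular vectors `w k` (orthonormal, in `rg(A*)`), and `S` is the span of the
right-singular vectors with singular value `< 1`, then `‖(I − Π_S)Af‖ ≤ ‖f − Af‖`
for every `f`. -/
theorem stmt_2 {n m : ℕ}
    (A Aplus : EuclideanSpace ℝ (Fin n) →ₗ[ℝ] EuclideanSpace ℝ (Fin n))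
    -- A⁺ maps into rg(A*)
    (hAplus_range : ∀ y, Aplus y ∈ LinearMap.range (LinearMap.adjoint A))
    -- A⁺ inverts A between rg(A*) and rg(A)
    (hAplus_left : ∀ x ∈ LinearMap.range (LinearMap.adjoint A), Aplus (A x) = x)
    (hAplus_right : ∀ y ∈ LinearMap.range A, A (Aplus y) = y)
    -- singular value decomposition of A⁺ − Π̄ on rg(A)
    (s : Fin m → ℝ) (hs : ∀ k, 0 ≤ s k)
    (v w : Fin m → EuclideanSpace ℝ (Fin n))
    (hv : Orthonormal ℝ v) (hw : Orthonormal ℝ w)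
    (hv_span : Submodule.span ℝ (Set.range v) = LinearMap.range A)
    (hw_range : ∀ k, w k ∈ LinearMap.range (LinearMap.adjoint A))
    (hSVD : ∀ y ∈ LinearMap.range A,
      Aplus y - (Submodule.orthogonalProjectionOnto (LinearMap.range (LinearMap.adjoint A)) y :
          EuclideanSpace ℝ (Fin n))
        = ∑ k, (s k * inner ℝ (v k) y) • w k)
    (S : Submodule ℝ (EuclideanSpace ℝ (Fin n)))
    (hS : S = Submodule.span ℝ (v '' {k | s k < 1}))
    (f : EuclideanSpace ℝ (Fin n)) :
    ‖A f - (Submodule.orthogonalProjectionOnto S (A f) : EuclideanSpace ℝ (Fin n))‖ ≤ ‖f - A f‖ := by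
  classical
  set g : EuclideanSpace ℝ (Fin n) := A f with hgdef
  have hg : g ∈ LinearMap.range A := ⟨f, rfl⟩
  set c : Fin m → ℝ := fun k => inner ℝ (v k) g with hc
  set T : Finset (Fin m) := Finset.univ.filter (fun k => s k < 1) with hT
  -- g is the sum of its coefficients in the orthonormal family v
  have hrep : g = ∑ k, c k • v k := by
    set x : EuclideanSpace ℝ (Fin n) := g - ∑ k, c k • v k with hx
    have hxmem : x ∈ Submodule.span ℝ (Set.range v) := by
      refine Submodule.sub_mem _ ?_ ?_
      · rw [hv_span]; exact hg
      · exact Submodule.sum_mem _ fun k _ =>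
          Submodule.smul_mem _ _ (Submodule.subset_span ⟨k, rfl⟩)
    have hxinner : ∀ j, (inner ℝ (v j) x : ℝ) = 0 := by
      intro j
      have h1 := hv.inner_right_fintype c j
      rw [hx, inner_sub_right, h1]
      simp only [hc]
      exact sub_self _
    have hxorth : x ∈ (Submodule.span ℝ (Set.range v))ᗮ := by
      rw [Submodule.mem_orthogonal]
      intro u hu
      induction hu using Submodule.span_induction with
      | mem u hu => obtain ⟨j, rfl⟩ := hu; exact hxinner j
      | zero => simp
      | add a b _ _ ha hb => rw [inner_add_left, ha, hb, add_zero]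
      | smul r a _ ha => rw [inner_smul_left, ha, mul_zero]
    have hself : (inner ℝ x x : ℝ) = 0 :=
      Submodule.inner_right_of_mem_orthogonal hxmem hxorth
    have hx0 : x = 0 := by rwa [inner_self_eq_zero] at hself
    exact sub_eq_zero.mp hx0
  -- the orthogonal projection of g onto S
  set p : EuclideanSpace ℝ (Fin n) := ∑ k ∈ T, c k • v k with hp
  have hpS : p ∈ S := by
    rw [hS]
    refine Submodule.sum_mem _ fun k hk => Submodule.smul_mem _ _ ?_
    exact Submodule.subset_span ⟨k, by simpa [hT] using (Finset.mem_filter.mp hk).2, rfl⟩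
  have hgp : g - p = ∑ k ∈ Tᶜ, c k • v k := by
    rw [hp]
    nth_rewrite 1 [hrep]
    rw [← Finset.sum_compl_add_sum T (fun k => c k • v k)]
    abel
  have hproj : (Submodule.orthogonalProjectionOnto S g : EuclideanSpace ℝ (Fin n)) = p := by
    refine Submodule.eq_starProjection_of_mem_orthogonal hpS ?_
    rw [Submodule.mem_orthogonal, hS]
    intro u hu
    induction hu using Submodule.span_induction with
    | mem u hu =>
      obtain ⟨j, hj, rfl⟩ := hu
      have hjs : s j < 1 := hj
      have hjT : j ∉ Tᶜ := by simp [hT, hjs]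
      rw [hgp, inner_sum]
      refine Finset.sum_eq_zero fun k hk => ?_
      have hkj : k ≠ j := fun h => hjT (h ▸ hk)
      rw [real_inner_smul_right, orthonormal_iff_ite.mp hv, if_neg hkj.symm, mul_zero]
    | zero => simp
    | add a b _ _ ha hb => rw [inner_add_left, ha, hb, add_zero]
    | smul r a _ ha => rw [inner_smul_left, ha, mul_zero]
  -- norm squared of the left-hand side
  have hLHS : ‖g - (Submodule.orthogonalProjectionOnto S g : EuclideanSpace ℝ (Fin n))‖ ^ 2
      = ∑ k ∈ Tᶜ, (c k) ^ 2 := by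
    rw [hproj, hgp, ← real_inner_self_eq_norm_sq, hv.inner_sum c c Tᶜ]
    simp [sq]
  -- f - Submodule.orthogonalProjectionOnto onto rg(A*) is killed by A
  set K : Submodule ℝ (EuclideanSpace ℝ (Fin n)) := LinearMap.range (LinearMap.adjoint A)
    with hK
  set Pf : EuclideanSpace ℝ (Fin n) := (Submodule.orthogonalProjectionOnto K f : EuclideanSpace ℝ (Fin n))
    with hPf
  have hfPf : f - Pf ∈ Kᗮ := Submodule.sub_starProjection_mem_orthogonal f
  have hAq : A (f - Pf) = 0 := by
    have h1 : (inner ℝ (A (f - Pf)) (A (f - Pf)) : ℝ) = 0 := by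
      rw [← LinearMap.adjoint_inner_left]
      exact Submodule.inner_right_of_mem_orthogonal (LinearMap.mem_range_self _ _) hfPf
    rwa [inner_self_eq_zero] at h1
  have hAPf : A Pf = g := by
    have h2 : A f - A Pf = 0 := by rw [← map_sub]; exact hAq
    have := sub_eq_zero.mp h2
    rw [← this]
  have hPfK : Pf ∈ K := (Submodule.orthogonalProjectionOnto K f).2
  have hAplusg : Aplus g = Pf := by rw [← hAPf]; exact hAplus_left Pf hPfK
  -- SVD expression
  have hPfg : Pf - (Submodule.orthogonalProjectionOnto K g : EuclideanSpace ℝ (Fin n))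
      = ∑ k, (s k * c k) • w k := by
    rw [← hAplusg]; exact hSVD g hg
  have hPsub : ((Submodule.orthogonalProjectionOnto K (f - g) : EuclideanSpace ℝ (Fin n)))
      = Pf - (Submodule.orthogonalProjectionOnto K g : EuclideanSpace ℝ (Fin n)) := by
    rw [map_sub]; rfl
  -- norm squared of the projected difference
  have hmid : ‖(Submodule.orthogonalProjectionOnto K (f - g) : EuclideanSpace ℝ (Fin n))‖ ^ 2
      = ∑ k, (s k * c k) ^ 2 := by
    rw [hPsub, hPfg, ← real_inner_self_eq_norm_sq, hw.inner_sum]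
    simp [sq]
  -- projection shrinks norms
  have hshrink : ‖(Submodule.orthogonalProjectionOnto K (f - g) : EuclideanSpace ℝ (Fin n))‖ ≤ ‖f - g‖ := by
    have h1 : ‖Submodule.orthogonalProjectionOnto K (f - g)‖ ≤ ‖Submodule.orthogonalProjectionOnto K‖ * ‖f - g‖ :=
      (Submodule.orthogonalProjectionOnto K).le_opNorm _
    have h2 : ‖Submodule.orthogonalProjectionOnto K‖ * ‖f - g‖ ≤ 1 * ‖f - g‖ :=
      mul_le_mul_of_nonneg_right (Submodule.orthogonalProjectionOnto_norm_le K) (norm_nonneg _)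
    calc ‖(Submodule.orthogonalProjectionOnto K (f - g) : EuclideanSpace ℝ (Fin n))‖
        = ‖Submodule.orthogonalProjectionOnto K (f - g)‖ := rfl
      _ ≤ 1 * ‖f - g‖ := h1.trans h2
      _ = ‖f - g‖ := one_mul _
  -- the sum comparison
  have hsum : ∑ k ∈ Tᶜ, (c k) ^ 2 ≤ ∑ k, (s k * c k) ^ 2 := by
    refine le_trans ?_ (Finset.sum_le_sum_of_subset_of_nonneg (Finset.subset_univ Tᶜ)
      (fun k _ _ => sq_nonneg _))
    refine Finset.sum_le_sum fun k hk => ?_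
    have hk1 : 1 ≤ s k := by
      have h3 := Finset.mem_compl.mp hk
      simp only [hT, Finset.mem_filter, Finset.mem_univ, true_and, not_lt] at h3
      exact h3
    nlinarith [mul_nonneg (mul_nonneg (hs k) (sub_nonneg.mpr hk1)) (sq_nonneg (c k)),
      mul_nonneg (sub_nonneg.mpr hk1) (sq_nonneg (c k)), sq_nonneg (c k)]
  -- conclude
  have key : ‖g - (Submodule.orthogonalProjectionOnto S g : EuclideanSpace ℝ (Fin n))‖ ^ 2 ≤ ‖f - g‖ ^ 2 := by
    calc ‖g - (Submodule.orthogonalProjectionOnto S g : EuclideanSpace ℝ (Fin n))‖ ^ 2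
        = ∑ k ∈ Tᶜ, (c k) ^ 2 := hLHS
      _ ≤ ∑ k, (s k * c k) ^ 2 := hsum
      _ = ‖(Submodule.orthogonalProjectionOnto K (f - g) : EuclideanSpace ℝ (Fin n))‖ ^ 2 := hmid.symm
      _ ≤ ‖f - g‖ ^ 2 := by gcongr <;> positivity
  exact le_of_sq_le_sq key (norm_nonneg _)
end

section
/- With the notation of the previous statement (A an n×n matrix, A⁺ the pseudo-inverse operator from rg(A) to rg(A*), Π̄ the projection-induced operator, and S the span of right-singular vectors of A⁺ − Π̄ with singular values < 1), one has dim(S) ≤ 4·Tr(A*A). -/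
open MeasureTheory Finset

lemma trace_onb {n : ℕ} {ι : Type*} [Fintype ι] [DecidableEq ι]
    (b : OrthonormalBasis ι ℝ (EuclideanSpace ℝ (Fin n)))
    (f : EuclideanSpace ℝ (Fin n) →ₗ[ℝ] EuclideanSpace ℝ (Fin n)) :
    LinearMap.trace ℝ (EuclideanSpace ℝ (Fin n)) f = ∑ i, inner ℝ (b i) (f (b i)) := by
  rw [LinearMap.trace_eq_matrix_trace ℝ b.toBasis, Matrix.trace]
  refine Finset.sum_congr rfl fun i _ => ?_
  rw [Matrix.diag_apply, LinearMap.toMatrix_apply, OrthonormalBasis.coe_toBasis,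
    OrthonormalBasis.coe_toBasis_repr_apply, OrthonormalBasis.repr_apply_apply]


/-- Let `A` be a linear operator on `ℝⁿ`, `A⁺` its pseudo-inverse (inverse of the
bijection `rg(A*) → rg(A)` induced by `A`), and `Π̄` the orthogonal projection onto
`rg(A*)` restricted to `rg(A)`.  If `A⁺ − Π̄` has a singular value decomposition with
singular values `s k`, right-singular vectors `v k` (an orthonormal basis of `rg(A)`)
and left-singular vectors `w k` (orthonormal, in `rg(A*)`), and `S` is the span of the
right-singular vectors with singular value `< 1`, then `dim(S) ≤ 4·Tr(A*A)`. -/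
theorem stmt_3 {n m : ℕ}
    (A Aplus : EuclideanSpace ℝ (Fin n) →ₗ[ℝ] EuclideanSpace ℝ (Fin n))
    -- A⁺ maps into rg(A*)
    (hAplus_range : ∀ y, Aplus y ∈ LinearMap.range (LinearMap.adjoint A))
    -- A⁺ inverts A between rg(A*) and rg(A)
    (hAplus_left : ∀ x ∈ LinearMap.range (LinearMap.adjoint A), Aplus (A x) = x)
    (hAplus_right : ∀ y ∈ LinearMap.range A, A (Aplus y) = y)
    -- singular value decomposition of A⁺ − Π̄ on rg(A)
    (s : Fin m → ℝ) (hs : ∀ k, 0 ≤ s k)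
    (v w : Fin m → EuclideanSpace ℝ (Fin n))
    (hv : Orthonormal ℝ v) (hw : Orthonormal ℝ w)
    (hv_span : Submodule.span ℝ (Set.range v) = LinearMap.range A)
    (hw_range : ∀ k, w k ∈ LinearMap.range (LinearMap.adjoint A))
    (hSVD : ∀ y ∈ LinearMap.range A,
      Aplus y - (Submodule.orthogonalProjection (LinearMap.range (LinearMap.adjoint A)) y :
          EuclideanSpace ℝ (Fin n))
        = ∑ k, (s k * inner ℝ (v k) y) • w k)
    (S : Submodule ℝ (EuclideanSpace ℝ (Fin n)))
    (hS : S = Submodule.span ℝ (v '' {k | s k < 1})) :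
    (Module.finrank ℝ S : ℝ)
      ≤ 4 * LinearMap.trace ℝ (EuclideanSpace ℝ (Fin n)) (LinearMap.adjoint A ∘ₗ A) := by
  classical
  -- S is contained in the range of A
  have hSsubA : S ≤ LinearMap.range A := by
    rw [hS, ← hv_span]
    exact Submodule.span_mono (Set.image_subset_range v _)
  -- inner products with v k vanish on S when s k ≥ 1
  have hvanish : ∀ y ∈ S, ∀ k, 1 ≤ s k → (inner ℝ (v k) y : ℝ) = 0 := by
    intro y hy k hk
    rw [hS] at hy
    induction hy using Submodule.span_induction with
    | mem x hx =>
      obtain ⟨j, hj, rfl⟩ := hx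
      have hkj : k ≠ j := by
        intro h; rw [h] at hk; exact absurd hj (by simp [not_lt.mpr hk])
      simpa [hkj] using (orthonormal_iff_ite.mp hv) k j
    | zero => simp
    | add x y _ _ hx hy => rw [inner_add_right, hx, hy, add_zero]
    | smul c x _ hx => rw [real_inner_smul_right, hx, mul_zero]
  -- key estimate : ‖Aplus y‖ ≤ 2‖y‖ on S
  have hkey : ∀ y ∈ S, ‖Aplus y‖ ≤ 2 * ‖y‖ := by
    intro y hy
    have hyA : y ∈ LinearMap.range A := hSsubA hy
    have h1 := hSVD y hyA
    have hAp : Aplus y = (∑ k, (s k * inner ℝ (v k) y) • w k) +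
        (Submodule.orthogonalProjection (LinearMap.range (LinearMap.adjoint A)) y : EuclideanSpace ℝ (Fin n)) :=
      eq_add_of_sub_eq h1
    have hP : ‖(Submodule.orthogonalProjection (LinearMap.range (LinearMap.adjoint A)) y : EuclideanSpace ℝ (Fin n))‖ ≤ ‖y‖ := by
      rw [Submodule.norm_coe]
      simpa using
        (Submodule.orthogonalProjection (LinearMap.range (LinearMap.adjoint A))).le_of_opNorm_le
          (Submodule.orthogonalProjection_norm_le _) y
    have hsum : ‖∑ k, (s k * inner ℝ (v k) y) • w k‖ ≤ ‖y‖ := by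
      have hsq : ‖∑ k, (s k * inner ℝ (v k) y) • w k‖ ^ 2 ≤ ‖y‖ ^ 2 := by
        have h2 : ‖∑ k, (s k * inner ℝ (v k) y) • w k‖ ^ 2
            = ∑ k, (s k * inner ℝ (v k) y) ^ 2 := by
          have := hw.inner_sum (fun k => s k * inner ℝ (v k) y)
            (fun k => s k * inner ℝ (v k) y) Finset.univ
          rw [← real_inner_self_eq_norm_sq, this]
          simp [sq]
        rw [h2]
        have h3 : ∀ k : Fin m, (s k * inner ℝ (v k) y) ^ 2 ≤ ‖(inner ℝ (v k) y : ℝ)‖ ^ 2 := by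
          intro k
          rcases lt_or_ge (s k) 1 with h | h
          · have h0 := hs k
            have h4 : s k ^ 2 ≤ 1 := by nlinarith
            rw [Real.norm_eq_abs, sq_abs, mul_pow]
            nlinarith [sq_nonneg (inner ℝ (v k) y : ℝ)]
          · rw [hvanish y hy k h]
            simp
        calc ∑ k, (s k * inner ℝ (v k) y) ^ 2 ≤ ∑ k, ‖(inner ℝ (v k) y : ℝ)‖ ^ 2 :=
              Finset.sum_le_sum fun k _ => h3 k
          _ ≤ ‖y‖ ^ 2 := hv.sum_inner_products_le y
      nlinarith [norm_nonneg (∑ k, (s k * inner ℝ (v k) y) • w k), norm_nonneg y]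
    calc ‖Aplus y‖ ≤ ‖∑ k, (s k * inner ℝ (v k) y) • w k‖ +
        ‖(Submodule.orthogonalProjection (LinearMap.range (LinearMap.adjoint A)) y : EuclideanSpace ℝ (Fin n))‖ := by
          rw [hAp]; exact norm_add_le _ _
      _ ≤ ‖y‖ + ‖y‖ := add_le_add hsum hP
      _ = 2 * ‖y‖ := by ring
  -- the subspace W = Aplus(S)
  set W : Submodule ℝ (EuclideanSpace ℝ (Fin n)) := S.map Aplus with hW
  have hWkey : ∀ x ∈ W, ‖x‖ ≤ 2 * ‖A x‖ := by
    rintro x ⟨y, hy, rfl⟩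
    have : A (Aplus y) = y := hAplus_right y (hSsubA hy)
    rw [this]
    exact hkey y hy
  -- rank comparison
  have hrank : Module.finrank ℝ S ≤ Module.finrank ℝ W := by
    have hle : S ≤ W.map A := by
      intro y hy
      exact ⟨Aplus y, Submodule.mem_map_of_mem hy, hAplus_right y (hSsubA hy)⟩
    calc Module.finrank ℝ S ≤ Module.finrank ℝ (W.map A) := Submodule.finrank_mono hle
      _ ≤ Module.finrank ℝ W := Submodule.finrank_map_le A W
  -- orthonormal basis of W, viewed in E
  set d := Module.finrank ℝ W with hd
  set ob := stdOrthonormalBasis ℝ W with hob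
  set e : Fin d → EuclideanSpace ℝ (Fin n) := fun j => ((ob j : W) : EuclideanSpace ℝ (Fin n)) with he_def
  have he : Orthonormal ℝ e := ob.orthonormal.comp_linearIsometry W.subtypeₗᵢ
  obtain ⟨u, b, hsub, hb⟩ := he.toSubtypeRange.exists_orthonormalBasis_extension
  -- trace computation
  have htr : LinearMap.trace ℝ (EuclideanSpace ℝ (Fin n)) (LinearMap.adjoint A ∘ₗ A) = ∑ x ∈ u, ‖A x‖ ^ 2 := by
    rw [trace_onb b]
    rw [← Finset.sum_coe_sort u (fun x => ‖A x‖ ^ 2)]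
    refine Finset.sum_congr rfl fun i _ => ?_
    rw [hb]
    show (inner ℝ (i : EuclideanSpace ℝ (Fin n)) ((LinearMap.adjoint A) (A i)) : ℝ) = _
    rw [LinearMap.adjoint_inner_right, real_inner_self_eq_norm_sq]
  -- lower bound on each term coming from W
  have hterm : ∀ j : Fin d, (1:ℝ)/4 ≤ ‖A (e j)‖ ^ 2 := by
    intro j
    have hmem : e j ∈ W := (ob j).2
    have hnorm : ‖e j‖ = 1 := he.1 j
    have := hWkey (e j) hmem
    rw [hnorm] at this
    nlinarith [norm_nonneg (A (e j))]
  have hinj : Function.Injective e := he.linearIndependent.injective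
  have htsub : Finset.univ.image e ⊆ u := by
    intro x hx
    obtain ⟨j, _, rfl⟩ := Finset.mem_image.mp hx
    exact hsub (Set.mem_range_self j)
  have hsum_ge : (d : ℝ) / 4 ≤ ∑ x ∈ u, ‖A x‖ ^ 2 := by
    calc (d : ℝ) / 4 = ∑ _j : Fin d, (1:ℝ)/4 := by simp [Finset.sum_const]; ring
      _ ≤ ∑ j : Fin d, ‖A (e j)‖ ^ 2 := Finset.sum_le_sum fun j _ => hterm j
      _ = ∑ x ∈ Finset.univ.image e, ‖A x‖ ^ 2 := by
          rw [Finset.sum_image (fun a _ b _ hab => hinj hab)]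
      _ ≤ ∑ x ∈ u, ‖A x‖ ^ 2 :=
          Finset.sum_le_sum_of_subset_of_nonneg htsub fun _ _ _ => sq_nonneg _
  have hfin : (Module.finrank ℝ S : ℝ) ≤ (d : ℝ) := by exact_mod_cast hrank
  rw [htr]
  linarith
end

section
/- (Makovoz-type approximation) For every g in the convex hull of φ₁,…,φ_M ∈ ℝⁿ and every integer D ≥ 1, there exists a subset m ⊆ {1,…,M} with |m| = min(2D, M) such that ‖g − Π_{S_m} g‖² ≤ (4/D)·max_{1≤j≤M} ‖φⱼ‖², where S_m is the linear span of {φⱼ : j ∈ m} and Π_{S_m} is the orthogonal projection onto S_m. -/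
open RealInnerProductSpace

/-- (Makovoz-type approximation) For every `g` in the convex hull of `φ₁,…,φ_M ∈ ℝⁿ` and
every integer `D ≥ 1`, there is a subset `m ⊆ {1,…,M}` with `|m| = min(2D, M)` such that
`‖g − Π_{S_m} g‖² ≤ (4/D)·max_j ‖φⱼ‖²`, where `S_m = span{φⱼ : j ∈ m}`. -/
theorem stmt_13 {n M : ℕ} (φ : Fin M → EuclideanSpace ℝ (Fin n))
    (g : EuclideanSpace ℝ (Fin n)) (hg : g ∈ convexHull ℝ (Set.range φ))
    (D : ℕ) (hD : 1 ≤ D) :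
    ∃ m : Finset (Fin M), m.card = min (2 * D) M ∧
      ‖g - (Submodule.orthogonalProjection (Submodule.span ℝ (φ '' ↑m)) g :
          EuclideanSpace ℝ (Fin n))‖ ^ 2
        ≤ 4 / (D : ℝ) * ⨆ j, ‖φ j‖ ^ 2 := by
  classical
  set C : ℝ := ⨆ j, ‖φ j‖ ^ 2 with hCdef
  obtain ⟨ι, _, w, z, hw0, hw1, hz, hx⟩ := mem_convexHull_iff_exists_fintype.mp hg
  -- M ≥ 1
  have hM : 0 < M := by
    obtain ⟨i, -⟩ : ∃ i : ι, 0 < w i := by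
      by_contra h'
      push_neg at h'
      have : (∑ i, w i) ≤ 0 := Finset.sum_nonpos (fun i _ => h' i)
      linarith [hw1]
    obtain ⟨j, -⟩ := hz i
    exact j.pos
  have hbdd : BddAbove (Set.range fun j => ‖φ j‖ ^ 2) :=
    (Set.finite_range _).bddAbove
  have hC : ∀ j, ‖φ j‖ ^ 2 ≤ C := fun j => le_ciSup hbdd j
  have hC0 : 0 ≤ C := le_trans (sq_nonneg _) (hC ⟨0, hM⟩)
  have hφs : ∀ j, ‖φ j‖ ≤ Real.sqrt C := fun j => by
    rw [show ‖φ j‖ = Real.sqrt (‖φ j‖ ^ 2) by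
      rw [Real.sqrt_sq (norm_nonneg _)]]
    exact Real.sqrt_le_sqrt (hC j)
  have hzs : ∀ i, ‖z i‖ ≤ Real.sqrt C := fun i => by
    obtain ⟨j, hj⟩ := hz i
    rw [← hj]; exact hφs j
  have hgs : ‖g‖ ≤ Real.sqrt C := by
    calc ‖g‖ = ‖∑ i, w i • z i‖ := by rw [hx]
    _ ≤ ∑ i, ‖w i • z i‖ := norm_sum_le _ _
    _ ≤ ∑ i, w i * Real.sqrt C := by
        refine Finset.sum_le_sum fun i _ => ?_
        rw [norm_smul, Real.norm_of_nonneg (hw0 i)]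
        exact mul_le_mul_of_nonneg_left (hzs i) (hw0 i)
    _ = Real.sqrt C := by rw [← Finset.sum_mul, hw1, one_mul]
  have hg2 : ‖g‖ ^ 2 ≤ C := by
    have := Real.sq_sqrt hC0
    nlinarith [norm_nonneg g, Real.sqrt_nonneg C]
  -- key: for any a, some direction φ j makes nonneg inner product
  have key : ∀ a : EuclideanSpace ℝ (Fin n), ∃ j : Fin M,
      0 ≤ ⟪a, φ j - g⟫ := by
    intro a
    by_contra h
    push_neg at h
    have hsum : ∑ i, w i * ⟪a, z i - g⟫ = 0 := by
      have h0 : ∑ i, w i • (z i - g) = (0 : EuclideanSpace ℝ (Fin n)) := by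
        simp only [smul_sub, Finset.sum_sub_distrib, ← Finset.sum_smul, hw1, hx, one_smul,
          sub_self]
      have h1 : ∑ i, w i * ⟪a, z i - g⟫ = ⟪a, ∑ i, w i • (z i - g)⟫ := by
        rw [inner_sum]
        exact Finset.sum_congr rfl (fun i _ => (real_inner_smul_right _ _ _).symm)
      rw [h1, h0, inner_zero_right]
    obtain ⟨i0, hi0⟩ : ∃ i : ι, 0 < w i := by
      by_contra h'
      push_neg at h'
      have : (∑ i, w i) ≤ 0 := Finset.sum_nonpos (fun i _ => h' i)
      linarith [hw1]
    have hlt : ∑ i, w i * ⟪a, z i - g⟫ < 0 := by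
      have hsum0 : ∑ _i : ι, (0:ℝ) = 0 := Finset.sum_const_zero
      rw [← hsum0]
      refine Finset.sum_lt_sum (fun i _ => ?_) ⟨i0, Finset.mem_univ _, ?_⟩
      · obtain ⟨j, hj⟩ := hz i
        have hlt' : ⟪a, z i - g⟫ < 0 := by rw [← hj]; exact h j
        exact mul_nonpos_of_nonneg_of_nonpos (hw0 i) hlt'.le
      · obtain ⟨j, hj⟩ := hz i0
        have hlt' : ⟪a, z i0 - g⟫ < 0 := by rw [← hj]; exact h j
        exact mul_neg_of_pos_of_neg hi0 hlt'
    linarith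
  -- main induction
  have main : ∀ k : ℕ, 1 ≤ k → ∃ T : Finset (Fin M), T.card ≤ k ∧
      ∃ v ∈ Submodule.span ℝ (φ '' ↑T), ‖g - v‖ ^ 2 ≤ 4 * C / k := by
    intro k hk
    induction k with
    | zero => omega
    | succ k ih =>
      rcases Nat.eq_or_lt_of_le hk with h1 | h1
      · -- base case k+1 = 1
        obtain ⟨j, hj⟩ := key g
        refine ⟨{j}, by simp, φ j, Submodule.subset_span (by simp), ?_⟩
        have hin : ⟪g, φ j⟫ ≥ ‖g‖ ^ 2 := by
          have := hj
          rw [inner_sub_right, real_inner_self_eq_norm_sq] at this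
          linarith
        have hexp : ‖g - φ j‖ ^ 2 = ‖g‖ ^ 2 - 2 * ⟪g, φ j⟫ + ‖φ j‖ ^ 2 := by
          rw [norm_sub_sq_real]
        have hk0 : k = 0 := by omega
        subst hk0
        rw [hexp]
        have h01 : ((0 + 1 : ℕ) : ℝ) = 1 := by norm_num
        rw [h01, div_one]
        nlinarith [hC j, sq_nonneg ‖g‖, hin]
      · -- step
        obtain ⟨T, hTc, v, hv, hvb⟩ := ih (by omega)
        obtain ⟨j, hj⟩ := key (g - v)
        set c : ℝ := (k : ℝ)
        have hc1 : (1:ℝ) ≤ c := by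
          have h : 1 ≤ k := by omega
          calc (1:ℝ) = ((1:ℕ):ℝ) := by norm_num
          _ ≤ ((k:ℕ):ℝ) := by exact_mod_cast h
        refine ⟨insert j T, ?_, (c/(c+1)) • v + (1/(c+1)) • φ j, ?_, ?_⟩
        · calc (insert j T).card ≤ T.card + 1 := Finset.card_insert_le _ _
          _ ≤ k + 1 := by omega
        · apply Submodule.add_mem
          · apply Submodule.smul_mem
            exact Submodule.span_mono (Set.image_mono (by simp)) hv
          · exact Submodule.smul_mem _ _ (Submodule.subset_span ⟨j, by simp⟩)
        · have hdecomp : g - ((c/(c+1)) • v + (1/(c+1)) • φ j)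
              = (c/(c+1)) • (g - v) + (1/(c+1)) • (g - φ j) := by
            have hsum1 : (c/(c+1)) + (1/(c+1)) = 1 := by
              field_simp
            have e : (c/(c+1)) • (g - v) + (1/(c+1)) • (g - φ j)
                = ((c/(c+1)) + (1/(c+1))) • g - ((c/(c+1)) • v + (1/(c+1)) • φ j) := by
              rw [smul_sub, smul_sub, add_smul]
              abel
            rw [e, hsum1, one_smul]
          rw [hdecomp]
          set a := g - v
          set b := g - φ j
          have hab : ⟪a, b⟫ ≤ 0 := by
            have : b = -(φ j - g) := by simp only [b, neg_sub]
            rw [this, inner_neg_right]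
            linarith
          have hb2 : ‖b‖ ^ 2 ≤ 4 * C := by
            have : ‖b‖ ≤ 2 * Real.sqrt C := by
              calc ‖b‖ ≤ ‖g‖ + ‖φ j‖ := norm_sub_le _ _
              _ ≤ 2 * Real.sqrt C := by linarith [hφs j]
            have h2 := Real.sq_sqrt hC0
            nlinarith [norm_nonneg b, Real.sqrt_nonneg C]
          have hexp : ‖(c/(c+1)) • a + (1/(c+1)) • b‖ ^ 2
              = (c/(c+1))^2 * ‖a‖^2 + 2 * ((c/(c+1)) * (1/(c+1)) * ⟪a, b⟫)
                + (1/(c+1))^2 * ‖b‖^2 := by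
            rw [norm_add_sq_real, norm_smul, norm_smul, real_inner_smul_left,
              real_inner_smul_right]
            have hc0' : (0:ℝ) ≤ c / (c+1) := by positivity
            have hc1' : (0:ℝ) ≤ 1 / (c+1) := by positivity
            rw [Real.norm_of_nonneg hc0', Real.norm_of_nonneg hc1']
            ring
          rw [hexp]
          have hca : ‖a‖ ^ 2 ≤ 4 * C / c := by
            have : ((k:ℕ):ℝ) = c := rfl
            simpa [this] using hvb
          have hcast : ((k + 1 : ℕ) : ℝ) = c + 1 := by push_cast; ring
          rw [hcast]
          have hc0 : (0:ℝ) < c := by linarith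
          have hc10 : (0:ℝ) < c + 1 := by linarith
          have hmul : (c/(c+1)) * (1/(c+1)) * ⟪a, b⟫ ≤ 0 := by
            apply mul_nonpos_of_nonneg_of_nonpos (by positivity) hab
          have e1 : (c/(c+1))^2 * ‖a‖^2 ≤ (c/(c+1))^2 * (4*C/c) := by
            apply mul_le_mul_of_nonneg_left hca (by positivity)
          have e2 : (1/(c+1))^2 * ‖b‖^2 ≤ (1/(c+1))^2 * (4*C) := by
            apply mul_le_mul_of_nonneg_left hb2 (by positivity)
          have efin : (c/(c+1))^2 * (4*C/c) + (1/(c+1))^2 * (4*C) = 4*C/(c+1) := by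
            field_simp
          linarith
  obtain ⟨T, hTc, v, hv, hvb⟩ := main D hD
  have hTle : T.card ≤ min (2 * D) M := by
    have := T.card_le_univ
    simp at this
    omega
  obtain ⟨m, hTm, -, hm⟩ := Finset.exists_subsuperset_card_eq (Finset.subset_univ T)
    hTle (by simp)
  refine ⟨m, hm, ?_⟩
  have hvm : v ∈ Submodule.span ℝ (φ '' ↑m) :=
    Submodule.span_mono (Set.image_mono hTm) hv
  have hproj : ‖g - (Submodule.orthogonalProjection (Submodule.span ℝ (φ '' ↑m)) g :
      EuclideanSpace ℝ (Fin n))‖ ≤ ‖g - v‖ := by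
    refine le_of_eq_of_le (Submodule.starProjection_minimal (U := Submodule.span ℝ (φ '' ↑m)) g) ?_
    exact ciInf_le ⟨0, fun x ⟨y, hy⟩ => hy ▸ norm_nonneg _⟩ (⟨v, hvm⟩ : Submodule.span ℝ (φ '' ↑m))
  calc ‖g - (Submodule.orthogonalProjection (Submodule.span ℝ (φ '' ↑m)) g :
      EuclideanSpace ℝ (Fin n))‖ ^ 2 ≤ ‖g - v‖ ^ 2 :=
        pow_le_pow_left₀ (norm_nonneg _) hproj 2
  _ ≤ 4 * C / D := hvb
  _ = 4 / (D:ℝ) * C := by ring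
end
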